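/- arXiv:1006.5156 — 2 statements merged into one kernel-verified Lean document; each statement's English description precedes it below -/
import Mathlib

section
/- Let C ⊂ C' ⊂ ℝ^r be an inclusion of finite rational cones, Λ' = C' ∩ ℤ^r, Λ = C ∩ ℤ^r. Let R' = ⊕_{λ∈Λ'} R'_λ be a Λ'-graded ℂ-algebra and set R = ⊕_{λ∈Λ} R'_λ. If R' is finitely generated as a ℂ-algebra, then so is R. -/
/-!
Auxiliary development: finitely generated rational cones, a Fourier–Motzkin style
hyperplane-section lemma, Gordan's lemma, and extraction of homogeneous generators,
used to prove the `inflating_fg` theorem below.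
-/

namespace InflatingAux

variable {d : ℕ}

/-- Cast a rational vector to a real vector. -/
def qc {d : ℕ} (w : Fin d → ℚ) : Fin d → ℝ := fun j => (w j : ℝ)

/-- The cone (with *real* nonnegative coefficients) generated by a finite family of
rational vectors. -/
def rcone {d : ℕ} {ι : Type} [Fintype ι] (w : ι → Fin d → ℚ) : Set (Fin d → ℝ) :=
  { x | ∃ c : ι → ℝ, (∀ i, 0 ≤ c i) ∧ x = ∑ i, c i • qc (w i) }

variable {ι : Type} [Fintype ι] {w : ι → Fin d → ℚ}

lemma mem_rcone_self (w : ι → Fin d → ℚ) (i : ι) : qc (w i) ∈ rcone w := by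
  classical
  refine ⟨fun k => if k = i then 1 else 0, fun k => by positivity, ?_⟩
  simp [ite_smul]

lemma rcone_zero (w : ι → Fin d → ℚ) : (0 : Fin d → ℝ) ∈ rcone w :=
  ⟨0, fun i => le_rfl, by simp⟩

lemma rcone_add {x y : Fin d → ℝ} (hx : x ∈ rcone w) (hy : y ∈ rcone w) :
    x + y ∈ rcone w := by
  obtain ⟨c, hc, rfl⟩ := hx
  obtain ⟨c', hc', rfl⟩ := hy
  exact ⟨c + c', fun i => add_nonneg (hc i) (hc' i), by
    simp [add_smul, Finset.sum_add_distrib]⟩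

lemma rcone_smul {t : ℝ} (ht : 0 ≤ t) {x : Fin d → ℝ} (hx : x ∈ rcone w) :
    t • x ∈ rcone w := by
  obtain ⟨c, hc, rfl⟩ := hx
  exact ⟨t • c, fun i => mul_nonneg ht (hc i), by
    simp [Finset.smul_sum, smul_smul]⟩

lemma rcone_sum {κ : Type} (s : Finset κ) (g : κ → Fin d → ℝ)
    (h : ∀ k ∈ s, g k ∈ rcone w) : (∑ k ∈ s, g k) ∈ rcone w := by
  classical
  induction s using Finset.induction_on with
  | empty => simpa using rcone_zero w
  | @insert a s' hk ih =>
    rw [Finset.sum_insert hk]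
    exact rcone_add (h a (Finset.mem_insert_self a s'))
      (ih fun k hks => h k (Finset.mem_insert_of_mem hks))

lemma rcone_subset {κ : Type} [Fintype κ] {u : κ → Fin d → ℚ}
    (h : ∀ k, qc (u k) ∈ rcone w) : rcone u ⊆ rcone w := by
  rintro x ⟨c, hc, rfl⟩
  exact rcone_sum _ _ fun k _ => rcone_smul (hc k) (h k)

@[simp] lemma qc_zero : qc (0 : Fin d → ℚ) = 0 := by
  funext j; simp [qc]

lemma qc_comb (a b : ℚ) (v v' : Fin d → ℚ) :
    qc (a • v + b • v') = (a : ℝ) • qc v + (b : ℝ) • qc v' := by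
  funext j
  simp only [Pi.add_apply, Pi.smul_apply, smul_eq_mul, qc]
  push_cast; ring

/-- summing `f`-values against a cone combination -/
lemma dot_comb (f : Fin d → ℚ) (c : ι → ℝ) :
    ∑ j, (f j : ℝ) * (∑ i, c i • qc (w i)) j
      = ∑ i, c i * ((∑ j, f j * w i j : ℚ) : ℝ) := by
  simp only [Finset.sum_apply, Pi.smul_apply, qc, smul_eq_mul]
  push_cast
  simp only [Finset.mul_sum]
  rw [Finset.sum_comm]
  exact Finset.sum_congr rfl fun i _ => Finset.sum_congr rfl fun j _ => by ring

/-- partition of a sum according to the sign of `φ` -/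
lemma sum_sign_partition {M : Type} [AddCommMonoid M] (φ : ι → ℚ) (g : ι → M) :
    ∑ i, g i = (∑ i ∈ Finset.univ.filter (fun i => 0 < φ i), g i)
      + (∑ i ∈ Finset.univ.filter (fun i => φ i < 0), g i)
      + (∑ i ∈ Finset.univ.filter (fun i => φ i = 0), g i) := by
  classical
  rw [← Finset.sum_filter_add_sum_filter_not Finset.univ (fun i => 0 < φ i) g, add_assoc]
  congr 1
  rw [← Finset.sum_filter_add_sum_filter_not (Finset.univ.filter (fun i => ¬ 0 < φ i))
    (fun i => φ i < 0) g]
  congr 1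
  · rw [Finset.filter_filter]
    exact Finset.sum_congr (Finset.filter_congr (by intro i _; simp; intro h; linarith)) fun _ _ => rfl
  · rw [Finset.filter_filter]
    refine Finset.sum_congr (Finset.filter_congr ?_) fun _ _ => rfl
    intro i _
    simp only [not_lt]
    constructor
    · rintro ⟨h1, h2⟩; exact le_antisymm h1 h2
    · intro h; simp [h]

theorem rcone_hyperplane (w : ι → Fin d → ℚ) (f : Fin d → ℚ) :
    ∃ (κ : Type) (_ : Fintype κ) (u : κ → Fin d → ℚ),
      rcone u = rcone w ∩ {x | ∑ j, (f j : ℝ) * x j = 0} := by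
  classical
  set φ : ι → ℚ := fun i => ∑ j, f j * w i j with hφ
  refine ⟨ι ⊕ ι × ι, inferInstance, ?_, ?_⟩
  · exact Sum.elim (fun i => if φ i = 0 then w i else 0)
      (fun p => if 0 < φ p.1 ∧ φ p.2 < 0 then (-φ p.2) • w p.1 + (φ p.1) • w p.2 else 0)
  set u : ι ⊕ ι × ι → Fin d → ℚ := Sum.elim (fun i => if φ i = 0 then w i else 0)
      (fun p => if 0 < φ p.1 ∧ φ p.2 < 0 then (-φ p.2) • w p.1 + (φ p.1) • w p.2 else 0)
    with hu
  have hdotu : ∀ k, (∑ j, f j * u k j) = 0 := by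
    rintro (i | ⟨i, j⟩)
    · simp only [hu, Sum.elim_inl]
      split_ifs with h
      · exact h
      · simp
    · simp only [hu, Sum.elim_inr]
      split_ifs with h
      · simp only [Pi.add_apply, Pi.smul_apply, smul_eq_mul]
        have : ∑ jj, f jj * (-φ j * w i jj + φ i * w j jj)
            = -φ j * (∑ jj, f jj * w i jj) + φ i * (∑ jj, f jj * w j jj) := by
          rw [Finset.mul_sum, Finset.mul_sum, ← Finset.sum_add_distrib]
          exact Finset.sum_congr rfl fun jj _ => by ring
        rw [this]
        show -φ j * φ i + φ i * φ j = 0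
        ring
      · simp
  have humem : ∀ k, qc (u k) ∈ rcone w := by
    rintro (i | ⟨i, j⟩)
    · simp only [hu, Sum.elim_inl]
      split_ifs
      · exact mem_rcone_self w i
      · simpa using rcone_zero w
    · simp only [hu, Sum.elim_inr]
      split_ifs with h
      · rw [qc_comb]
        refine rcone_add (rcone_smul ?_ (mem_rcone_self w i))
          (rcone_smul ?_ (mem_rcone_self w j))
        · exact_mod_cast (neg_nonneg.mpr h.2.le)
        · exact_mod_cast h.1.le
      · simpa using rcone_zero w
  ext x
  constructor
  · rintro ⟨c, hc, rfl⟩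
    refine ⟨rcone_sum _ _ fun k _ => rcone_smul (hc k) (humem k), ?_⟩
    show ∑ j, (f j : ℝ) * _ = 0
    rw [dot_comb]
    refine Finset.sum_eq_zero fun k _ => ?_
    rw [hdotu k]
    simp
  · rintro ⟨⟨c, hc, rfl⟩, hdot⟩
    set ψ : ι → ℝ := fun i => ((φ i : ℚ) : ℝ) with hψ
    set P : Finset ι := Finset.univ.filter (fun i => 0 < φ i) with hP
    set N : Finset ι := Finset.univ.filter (fun i => φ i < 0) with hN
    set Z : Finset ι := Finset.univ.filter (fun i => φ i = 0) with hZ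
    set t : ℝ := ∑ i ∈ P, c i * ψ i with ht'
    have hψP : ∀ i ∈ P, 0 < ψ i := by
      intro i hi; rw [hP, Finset.mem_filter] at hi
      have : (0:ℝ) < ((φ i : ℚ) : ℝ) := by exact_mod_cast hi.2
      exact this
    have hψN : ∀ i ∈ N, ψ i < 0 := by
      intro i hi; rw [hN, Finset.mem_filter] at hi
      have : ((φ i : ℚ) : ℝ) < 0 := by exact_mod_cast hi.2
      exact this
    have hψZ : ∀ i ∈ Z, ψ i = 0 := by
      intro i hi; rw [hZ, Finset.mem_filter] at hi
      have : ((φ i : ℚ) : ℝ) = 0 := by exact_mod_cast hi.2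
      exact this
    have ht : 0 ≤ t := Finset.sum_nonneg fun i hi =>
      mul_nonneg (hc i) (hψP i hi).le
    have hsum0 : ∑ i, c i * ψ i = 0 := by
      have h0 := hdot
      rw [Set.mem_setOf_eq, dot_comb] at h0
      exact h0
    have hpart := sum_sign_partition φ (fun i => c i * ψ i)
    have hZ0 : ∑ i ∈ Z, c i * ψ i = 0 :=
      Finset.sum_eq_zero fun i hi => by rw [hψZ i hi, mul_zero]
    have hs : ∑ j ∈ N, c j * (-ψ j) = t := by
      have e : ∑ j ∈ N, c j * (-ψ j) = -∑ j ∈ N, c j * ψ j := by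
        rw [← Finset.sum_neg_distrib]
        exact Finset.sum_congr rfl fun j _ => by ring
      rw [← hP, ← hN, ← hZ] at hpart
      rw [hsum0, ← ht', hZ0] at hpart
      rw [e]; linarith
    refine ⟨Sum.elim (fun i => if φ i = 0 then c i else 0)
        (fun p => if 0 < φ p.1 ∧ φ p.2 < 0 then c p.1 * c p.2 / t else 0), ?_, ?_⟩
    · rintro (i | p)
      · simp only [Sum.elim_inl]; split_ifs; exacts [hc i, le_rfl]
      · simp only [Sum.elim_inr]; split_ifs with hp
        · exact div_nonneg (mul_nonneg (hc _) (hc _)) ht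
        · exact le_rfl
    · rw [Fintype.sum_sum_type]
      simp only [hu, Sum.elim_inl, Sum.elim_inr]
      rw [Fintype.sum_prod_type]
      have e1 : (∑ i : ι, (if φ i = 0 then c i else 0) • qc (if φ i = 0 then w i else 0))
          = ∑ i ∈ Z, c i • qc (w i) := by
        rw [hZ, Finset.sum_filter]
        exact Finset.sum_congr rfl fun i _ => by split_ifs with h <;> simp
      have e2 : (∑ i : ι, ∑ j : ι,
            (if 0 < φ i ∧ φ j < 0 then c i * c j / t else 0) •
              qc (if 0 < φ i ∧ φ j < 0 then (-φ j) • w i + (φ i) • w j else 0))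
          = ∑ i ∈ P, ∑ j ∈ N,
              (c i * c j / t) • ((-ψ j) • qc (w i) + ψ i • qc (w j)) := by
        rw [hP, Finset.sum_filter]
        refine Finset.sum_congr rfl fun i _ => ?_
        by_cases hi : 0 < φ i
        · rw [if_pos hi, hN, Finset.sum_filter]
          refine Finset.sum_congr rfl fun j _ => ?_
          by_cases hj : φ j < 0
          · rw [if_pos hj, if_pos ⟨hi, hj⟩, if_pos ⟨hi, hj⟩, qc_comb]
            rw [hψ]; push_cast; ring_nf
          · rw [if_neg hj, if_neg (fun hh => hj hh.2), if_neg (fun hh => hj hh.2)]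
            simp
        · rw [if_neg hi]
          refine Finset.sum_eq_zero fun j _ => ?_
          rw [if_neg (fun hh => hi hh.1), if_neg (fun hh => hi hh.1)]
          simp
      rw [e1, e2]
      have hpart2 := sum_sign_partition φ (fun i => c i • qc (w i))
      rw [← hP, ← hN, ← hZ] at hpart2
      rw [hpart2]
      have goal2 : (∑ i ∈ P, c i • qc (w i)) + (∑ j ∈ N, c j • qc (w j))
          = ∑ i ∈ P, ∑ j ∈ N, (c i * c j / t) • ((-ψ j) • qc (w i) + ψ i • qc (w j)) := by
        rcases eq_or_lt_of_le ht with ht0 | htpos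
        · -- t = 0 : all coefficients on P and N vanish
          have hP0 : ∀ i ∈ P, c i = 0 := by
            intro i hi
            have hall := (Finset.sum_eq_zero_iff_of_nonneg
              (fun i hi => mul_nonneg (hc i) (hψP i hi).le)).1 ht0.symm i hi
            rcases mul_eq_zero.1 hall with h | h
            · exact h
            · exact absurd h (ne_of_gt (hψP i hi))
          have hN0 : ∀ j ∈ N, c j = 0 := by
            intro j hj
            have hs0 : ∑ j ∈ N, c j * (-ψ j) = 0 := by rw [hs, ← ht0]
            have hall := (Finset.sum_eq_zero_iff_of_nonneg
              (fun j hj => mul_nonneg (hc j) (by linarith [hψN j hj]))).1 hs0 j hj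
            rcases mul_eq_zero.1 hall with h | h
            · exact h
            · exact absurd h (ne_of_gt (by linarith [hψN j hj]))
          rw [Finset.sum_eq_zero (fun i hi => by rw [hP0 i hi, zero_smul]),
            Finset.sum_eq_zero (fun j hj => by rw [hN0 j hj, zero_smul]),
            Finset.sum_eq_zero (fun i hi => Finset.sum_eq_zero fun j hj => by
              rw [hP0 i hi, zero_mul, zero_div, zero_smul]), add_zero]
        · -- t > 0
          have htne : t ≠ 0 := ne_of_gt htpos
          have expand : ∀ i ∈ P, ∑ j ∈ N, (c i * c j / t) • ((-ψ j) • qc (w i) + ψ i • qc (w j))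
              = c i • qc (w i) + ∑ j ∈ N, (c i * c j * ψ i / t) • qc (w j) := by
            intro i hi
            have : ∀ j ∈ N, (c i * c j / t) • ((-ψ j) • qc (w i) + ψ i • qc (w j))
                = (c i * (c j * (-ψ j)) / t) • qc (w i) + (c i * c j * ψ i / t) • qc (w j) := by
              intro j _
              rw [smul_add, smul_smul, smul_smul]
              congr 1 <;> ring_nf
            rw [Finset.sum_congr rfl this, Finset.sum_add_distrib]
            congr 1
            rw [← Finset.sum_smul]
            congr 1
            have e3 : ∀ jj ∈ N, c i * (c jj * -ψ jj) / t = (c i / t) * (c jj * -ψ jj) :=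
              fun jj _ => by ring
            have e4 : ∀ jj ∈ N, c jj * -ψ jj = c jj * (-ψ jj) := fun jj _ => rfl
            rw [Finset.sum_congr rfl e3, ← Finset.mul_sum,
              Finset.sum_congr rfl e4, hs]
            field_simp
          rw [Finset.sum_congr rfl expand, Finset.sum_add_distrib]
          congr 1
          rw [Finset.sum_comm]
          refine Finset.sum_congr rfl fun j hj => ?_
          rw [← Finset.sum_smul]
          congr 1
          have : ∀ i ∈ P, c i * c j * ψ i / t = (c j / t) * (c i * ψ i) := by
            intro i _; ring
          rw [Finset.sum_congr rfl this, ← Finset.mul_sum, ← ht']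
          field_simp
      rw [← goal2]
      abel

theorem rcone_orthant {d : ℕ} :
    rcone (fun i j : Fin d => if i = j then (1:ℚ) else 0) = {x | ∀ j, 0 ≤ x j} := by
  ext x
  constructor
  · rintro ⟨c, hc, rfl⟩
    intro j
    simp only [Finset.sum_apply, Pi.smul_apply, smul_eq_mul]
    refine Finset.sum_nonneg fun i _ => ?_
    have : (0:ℝ) ≤ qc (fun jj : Fin d => if i = jj then (1:ℚ) else 0) j := by
      simp only [qc]; split_ifs <;> norm_num
    exact mul_nonneg (hc i) this
  · intro hx
    refine ⟨x, hx, ?_⟩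
    funext j
    simp only [Finset.sum_apply, Pi.smul_apply, smul_eq_mul, qc]
    rw [Finset.sum_eq_single j]
    · simp
    · intro i _ hij
      simp [hij]
    · simp

theorem rcone_orthant_kernel {d : ℕ} (p : ℕ) (f : Fin p → Fin d → ℚ) :
    ∃ (κ : Type) (_ : Fintype κ) (u : κ → Fin d → ℚ),
      rcone u = {x | (∀ j, 0 ≤ x j) ∧ ∀ k, ∑ j, (f k j : ℝ) * x j = 0} := by
  induction p with
  | zero =>
    refine ⟨Fin d, inferInstance, fun i j => if i = j then 1 else 0, ?_⟩
    rw [rcone_orthant]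
    ext x
    constructor
    · intro h; exact ⟨h, fun k => k.elim0⟩
    · rintro ⟨h, _⟩; exact h
  | succ p ih =>
    obtain ⟨κ, hκ, u, hu⟩ := ih (fun k => f k.succ)
    obtain ⟨κ', hκ', u', hu'⟩ := rcone_hyperplane u (f 0)
    refine ⟨κ', hκ', u', ?_⟩
    rw [hu', hu]
    ext x
    simp only [Set.mem_inter_iff, Set.mem_setOf_eq]
    rw [Fin.forall_fin_succ]
    tauto

lemma exists_nat_scale {d : ℕ} (v : Fin d → ℚ) (hv : ∀ j, 0 ≤ v j) :
    ∃ (D : ℕ) (m : Fin d → ℕ), 0 < D ∧ ∀ j, (m j : ℚ) = D * v j := by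
  have hdvd : ∀ j : Fin d, ∃ e : ℕ, (∏ jj, (v jj).den) = (v j).den * e := fun j =>
    (Finset.dvd_prod_of_mem (fun jj => (v jj).den) (Finset.mem_univ j))
  choose e he using hdvd
  refine ⟨∏ jj, (v jj).den, fun j => (v j).num.toNat * e j, ?_, ?_⟩
  · exact Finset.prod_pos fun j _ => (v j).pos
  · intro j
    have hden : ((v j).den : ℚ) ≠ 0 := Nat.cast_ne_zero.2 (v j).den_nz
    have hnum : ((v j).num : ℚ) = v j * (v j).den := by
      exact (div_eq_iff hden).1 (Rat.num_div_den (v j))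
    have htn : (((v j).num.toNat : ℕ) : ℚ) = ((v j).num : ℚ) := by
      exact_mod_cast congrArg (fun z : ℤ => (z : ℚ)) (Int.toNat_of_nonneg (Rat.num_nonneg.2 (hv j)))
    show ((((v j).num.toNat * e j : ℕ)) : ℚ) = ((∏ jj, (v jj).den : ℕ) : ℚ) * v j
    have hprod : ((∏ jj, (v jj).den : ℕ) : ℚ) = (((v j).den * e j : ℕ) : ℚ) := by
      exact_mod_cast congrArg (fun n : ℕ => (n : ℚ)) (he j)
    rw [hprod]
    push_cast
    rw [htn, hnum]
    ring

lemma rcone_nat_gens {d : ℕ} {κ : Type} [Fintype κ] (u : κ → Fin d → ℚ)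
    (hpos : ∀ k j, 0 ≤ u k j) :
    ∃ W : κ → Fin d → ℕ, rcone (fun k j => ((W k j : ℕ) : ℚ)) = rcone u := by
  choose D m hD hm using fun k => exists_nat_scale (u k) (hpos k)
  refine ⟨m, ?_⟩
  have key : ∀ k, qc (fun j => ((m k j : ℕ) : ℚ)) = (D k : ℝ) • qc (u k) := by
    intro k
    funext j
    simp only [qc, Pi.smul_apply, smul_eq_mul]
    exact_mod_cast congrArg (fun q : ℚ => (q : ℝ)) (hm k j)
  apply Set.Subset.antisymm
  · refine rcone_subset fun k => ?_
    rw [key k]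
    exact rcone_smul (by positivity) (mem_rcone_self u k)
  · refine rcone_subset fun k => ?_
    have : qc (u k) = ((D k : ℝ))⁻¹ • qc (fun j => ((m k j : ℕ) : ℚ)) := by
      rw [key k, smul_smul, inv_mul_cancel₀ (Nat.cast_ne_zero.2 (hD k).ne'), one_smul]
    rw [this]
    exact rcone_smul (by positivity) (mem_rcone_self _ k)

theorem gordan {d : ℕ} {κ : Type} [Fintype κ] (W : κ → Fin d → ℕ) :
    ∃ F : Finset (Fin d → ℕ),
      (∀ b ∈ F, (fun j => (b j : ℝ)) ∈ rcone (fun k j => ((W k j : ℕ) : ℚ))) ∧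
      ∀ a : Fin d → ℕ, (fun j => (a j : ℝ)) ∈ rcone (fun k j => ((W k j : ℕ) : ℚ)) →
        a ∈ AddSubmonoid.closure (F : Set (Fin d → ℕ)) := by
  classical
  set Wq : κ → Fin d → ℚ := fun k j => ((W k j : ℕ) : ℚ) with hWq
  have hqcW : ∀ k, qc (Wq k) = fun j => ((W k j : ℕ) : ℝ) := by
    intro k; funext j; simp [qc, hWq]
  set B : Fin d → ℕ := fun j => ∑ k, W k j with hB
  set F : Finset (Fin d → ℕ) :=
    (Finset.Iic B).filter (fun b => (fun j => (b j : ℝ)) ∈ rcone Wq) with hF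
  have hFmem : ∀ b ∈ F, (fun j => (b j : ℝ)) ∈ rcone Wq := by
    intro b hb; exact (Finset.mem_filter.1 hb).2
  refine ⟨F, hFmem, ?_⟩
  have hWmemF : ∀ k, W k ∈ F := by
    intro k
    rw [hF, Finset.mem_filter]
    refine ⟨Finset.mem_Iic.2 fun j => ?_, ?_⟩
    · exact Finset.single_le_sum (f := fun k' => W k' j) (fun _ _ => Nat.zero_le _)
        (Finset.mem_univ k)
    · rw [← hqcW k]; exact mem_rcone_self Wq k
  rintro a ⟨c, hc, hrep⟩
  have hco : ∀ j, (a j : ℝ) = ∑ k, c k * (W k j : ℝ) := by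
    intro j
    have := congrFun hrep j
    simpa [qc, hWq] using this
  set q : κ → ℕ := fun k => ⌊c k⌋₊ with hq
  have hqle : ∀ k, (q k : ℝ) ≤ c k := fun k => Nat.floor_le (hc k)
  have hqlt : ∀ k, c k ≤ (q k : ℝ) + 1 := fun k => (Nat.lt_floor_add_one (c k)).le
  have hle : ∀ j, ∑ k, q k * W k j ≤ a j := by
    intro j
    have : ((∑ k, q k * W k j : ℕ) : ℝ) ≤ ((a j : ℕ) : ℝ) := by
      push_cast
      rw [hco j]
      exact Finset.sum_le_sum fun k _ =>
        mul_le_mul_of_nonneg_right (hqle k) (Nat.cast_nonneg _)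
    exact_mod_cast this
  set z : Fin d → ℕ := fun j => a j - ∑ k, q k * W k j with hz
  have hzco : ∀ j, (z j : ℝ) = ∑ k, (c k - q k) * (W k j : ℝ) := by
    intro j
    have h1 : (z j : ℝ) = (a j : ℝ) - ∑ k, (q k : ℝ) * (W k j : ℝ) := by
      rw [hz]
      push_cast [Nat.cast_sub (hle j)]
      ring
    rw [h1, hco j, ← Finset.sum_sub_distrib]
    exact Finset.sum_congr rfl fun k _ => by ring
  have hzmem : (fun j => (z j : ℝ)) ∈ rcone Wq := by
    refine ⟨fun k => c k - q k, fun k => sub_nonneg.2 (hqle k), ?_⟩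
    funext j
    simp only [Finset.sum_apply, Pi.smul_apply, smul_eq_mul, hqcW]
    rw [hzco j]
  have hzF : z ∈ F := by
    rw [hF, Finset.mem_filter]
    refine ⟨Finset.mem_Iic.2 fun j => ?_, hzmem⟩
    have : ((z j : ℕ) : ℝ) ≤ ((B j : ℕ) : ℝ) := by
      rw [hzco j, hB]
      push_cast
      refine Finset.sum_le_sum fun k _ => ?_
      have h1 : c k - (q k : ℝ) ≤ 1 := by linarith [hqlt k]
      nlinarith [Nat.cast_nonneg (α := ℝ) (W k j), sub_nonneg.2 (hqle k)]
    exact_mod_cast this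
  have hrepn : a = (∑ k, q k • W k) + z := by
    funext j
    simp only [Pi.add_apply, Finset.sum_apply, Pi.smul_apply, smul_eq_mul, hz]
    have h := hle j
    omega
  rw [hrepn]
  refine AddSubmonoid.add_mem _ (AddSubmonoid.sum_mem _ fun k _ => ?_)
    (AddSubmonoid.subset_closure hzF)
  exact AddSubmonoid.nsmul_mem _ (AddSubmonoid.subset_closure (hWmemF k)) (q k)

theorem cone_monoid {s r n : ℕ} (lam : Fin s → Fin r → ℤ) (v : Fin n → Fin r → ℚ)
    (C : Set (Fin r → ℝ))
    (hC : C = { x | ∃ c : Fin n → ℝ, (∀ i, 0 ≤ c i) ∧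
        x = ∑ i, c i • (fun j => (v i j : ℝ)) }) :
    ∃ F : Finset (Fin s → ℕ),
      (∀ b ∈ F, (fun j => ∑ i, (b i : ℝ) * (lam i j : ℝ)) ∈ C) ∧
      ∀ a : Fin s → ℕ, (fun j => ∑ i, (a i : ℝ) * (lam i j : ℝ)) ∈ C →
        a ∈ AddSubmonoid.closure (F : Set (Fin s → ℕ)) := by
  classical
  set Sσ : Set (Fin s → ℝ) := { x | (∀ i, 0 ≤ x i) ∧
      (fun j => ∑ i, x i * (lam i j : ℝ)) ∈ C } with hSσ
  set f : Fin r → Fin (s + n) → ℚ :=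
    fun jr => Fin.append (fun i : Fin s => (lam i jr : ℚ)) (fun k : Fin n => - v k jr) with hf
  obtain ⟨κ, hκi, u, hu⟩ := rcone_orthant_kernel r f
  set u' : κ → Fin s → ℚ := fun k i => u k (Fin.castAdd n i) with hu'
  have hqc' : ∀ k i, qc (u' k) i = qc (u k) (Fin.castAdd n i) := by
    intro k i; simp [qc, hu']
  have hproj : rcone u' = Sσ := by
    ext x
    constructor
    · rintro ⟨c, hc, rfl⟩
      set y : Fin (s + n) → ℝ := ∑ k, c k • qc (u k) with hy
      have hymem : y ∈ rcone u := ⟨c, hc, rfl⟩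
      rw [hu] at hymem
      obtain ⟨hy0, hyker⟩ := hymem
      have hxy : ∀ i, (∑ k, c k • qc (u' k)) i = y (Fin.castAdd n i) := by
        intro i
        simp only [Finset.sum_apply, Pi.smul_apply, smul_eq_mul, hy, hqc']
      constructor
      · intro i; rw [hxy i]; exact hy0 _
      · rw [hC]
        refine ⟨fun k => y (Fin.natAdd s k), fun k => hy0 _, ?_⟩
        funext j
        have hker := hyker j
        rw [Fin.sum_univ_add] at hker
        simp only [hf, Fin.append_left, Fin.append_right] at hker
        push_cast at hker
        simp only [Finset.sum_apply, Pi.smul_apply, smul_eq_mul] at hxy ⊢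
        have this1 : ∑ i, (∑ k, c k * qc (u' k) i) * (lam i j : ℝ)
            = ∑ i, (lam i j : ℝ) * y (Fin.castAdd n i) :=
          Finset.sum_congr rfl fun i _ => by rw [← hxy i]; ring
        rw [this1]
        have h2 : ∑ k, y (Fin.natAdd s k) * ((v k j : ℚ) : ℝ)
            = -∑ k, -((v k j : ℚ) : ℝ) * y (Fin.natAdd s k) := by
          rw [← Finset.sum_neg_distrib]
          exact Finset.sum_congr rfl fun k _ => by ring
        rw [h2]
        linarith [hker]
    · rintro ⟨hx0, hxC⟩
      rw [hC] at hxC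
      obtain ⟨c, hc, hcx⟩ := hxC
      set y : Fin (s + n) → ℝ := Fin.append x c with hy
      have hymem : y ∈ rcone u := by
        rw [hu]
        constructor
        · intro t
          refine Fin.addCases (fun i => ?_) (fun k => ?_) t
          · rw [hy, Fin.append_left]; exact hx0 i
          · rw [hy, Fin.append_right]; exact hc k
        · intro jr
          rw [Fin.sum_univ_add]
          simp only [hf, hy, Fin.append_left, Fin.append_right]
          push_cast
          have hcj := congrFun hcx jr
          simp only [Finset.sum_apply, Pi.smul_apply, smul_eq_mul] at hcj
          have e1 : ∑ i, (lam i jr : ℝ) * x i = ∑ i, x i * (lam i jr : ℝ) :=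
            Finset.sum_congr rfl fun i _ => by ring
          have e2 : ∑ k, -((v k jr : ℚ) : ℝ) * c k = -∑ k, c k * ((v k jr : ℚ) : ℝ) := by
            rw [← Finset.sum_neg_distrib]
            exact Finset.sum_congr rfl fun k _ => by ring
          rw [e1, e2]
          rw [hcj]
          ring
      obtain ⟨cc, hcc, hccy⟩ := hymem
      refine ⟨cc, hcc, ?_⟩
      funext i
      have := congrFun hccy (Fin.castAdd n i)
      rw [hy, Fin.append_left] at this
      rw [this]
      simp only [Finset.sum_apply, Pi.smul_apply, smul_eq_mul, hqc']
  -- positivity of the generators of `u'`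
  have hpos : ∀ k j, 0 ≤ u' k j := by
    intro k j
    have hmem := mem_rcone_self u' k
    rw [hproj] at hmem
    have := hmem.1 j
    simp only [qc] at this
    exact_mod_cast this
  obtain ⟨W, hW⟩ := rcone_nat_gens u' hpos
  rw [hproj] at hW
  obtain ⟨F, hF1, hF2⟩ := gordan W
  rw [hW] at hF1 hF2
  refine ⟨F, ?_, ?_⟩
  · intro b hb
    have h := (hF1 b hb).2
    have e : (fun j => ∑ i, ((b i : ℕ) : ℝ) * (lam i j : ℝ))
        = (fun j => ∑ i, (fun jj => ((b jj : ℕ) : ℝ)) i * (lam i j : ℝ)) := rfl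
    exact h
  · intro a ha
    refine hF2 a ⟨fun i => Nat.cast_nonneg _, ?_⟩
    exact ha

/-- From a finite generating set, extract a finite homogeneous generating family. -/
lemma exists_homogeneous_gens {r : ℕ} (R' : Type) [CommRing R'] [Algebra ℂ R']
    (ℳ : (Fin r → ℤ) → Submodule ℂ R') [GradedRing ℳ]
    (hfg : (⊤ : Subalgebra ℂ R').FG) :
    ∃ (s : ℕ) (g : Fin s → R') (lam : Fin s → (Fin r → ℤ)),
      (∀ i, g i ∈ ℳ (lam i)) ∧ Algebra.adjoin ℂ (Set.range g) = ⊤ := by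
  classical
  obtain ⟨S, hS⟩ := hfg
  set T : Set R' := ⋃ x ∈ (S : Set R'),
    (fun nn => (DirectSum.decompose ℳ x nn : R')) ''
      ↑(DFinsupp.support (DirectSum.decompose ℳ x)) with hT
  have hTfin : T.Finite :=
    Set.Finite.biUnion S.finite_toSet
      (fun x _ => Set.Finite.image _ (Finset.finite_toSet _))
  have hhom : ∀ y ∈ T, ∃ nn, y ∈ ℳ nn := by
    intro y hy
    rw [hT] at hy
    simp only [Set.mem_iUnion, Set.mem_image] at hy
    obtain ⟨x, _, nn, _, rfl⟩ := hy
    exact ⟨nn, (DirectSum.decompose ℳ x nn).2⟩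
  have hadj : Algebra.adjoin ℂ T = ⊤ := by
    rw [← top_le_iff, ← hS]
    apply Algebra.adjoin_le
    intro x hx
    have hxsum := DirectSum.sum_support_decompose ℳ x
    rw [← hxsum]
    apply Subalgebra.sum_mem
    intro nn hnn
    apply Algebra.subset_adjoin
    rw [hT]
    refine Set.mem_biUnion hx ?_
    exact Set.mem_image_of_mem _ hnn
  set Tf : Finset R' := hTfin.toFinset with hTf
  set g : Fin Tf.card → R' := fun i => (Tf.equivFin.symm i : R') with hg
  have hrange : Set.range g = T := by
    rw [hg]
    have : Set.range (fun i => (Tf.equivFin.symm i : R')) =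
        Subtype.val '' Set.range Tf.equivFin.symm := (Set.range_comp _ _)
    rw [this, Equiv.range_eq_univ, Set.image_univ, Subtype.range_coe]
    rw [hTf]; exact Set.Finite.coe_toFinset hTfin
  have hmem : ∀ i, ∃ nn, g i ∈ ℳ nn := by
    intro i
    apply hhom
    rw [← hrange]
    exact Set.mem_range_self i
  choose lam hlam using hmem
  exact ⟨Tf.card, g, lam, hlam, by rw [hrange, hadj]⟩

end InflatingAux

open InflatingAux in
/-- **Inflating.** Let `C ⊆ C' ⊆ ℝ^r` be finite rational cones, and let `R'` be a
`ℂ`-algebra graded by `ℤ^r` with support in `Λ' = C' ∩ ℤ^r`. If `R'` is a finitely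
generated `ℂ`-algebra, then so is the subring `R = ⊕_{λ ∈ C ∩ ℤ^r} R'_λ`. -/
theorem inflating_fg (r : ℕ) (C C' : Set (Fin r → ℝ)) (hCC' : C ⊆ C')
    (hC : ∃ (n : ℕ) (v : Fin n → Fin r → ℚ),
      C = { x | ∃ c : Fin n → ℝ, (∀ i, 0 ≤ c i) ∧
        x = ∑ i, c i • (fun j => (v i j : ℝ)) })
    (hC' : ∃ (n : ℕ) (v : Fin n → Fin r → ℚ),
      C' = { x | ∃ c : Fin n → ℝ, (∀ i, 0 ≤ c i) ∧
        x = ∑ i, c i • (fun j => (v i j : ℝ)) })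
    (R' : Type) [CommRing R'] [Algebra ℂ R']
    (ℳ : (Fin r → ℤ) → Submodule ℂ R') [GradedRing ℳ]
    (hsupp : ∀ lam : Fin r → ℤ, (fun j => ((lam j : ℝ))) ∉ C' → ℳ lam = ⊥)
    (hfg : (⊤ : Subalgebra ℂ R').FG) :
    (Algebra.adjoin ℂ (⋃ lam ∈ {lam : Fin r → ℤ |
      (fun j => ((lam j : ℝ))) ∈ C}, (ℳ lam : Set R'))).FG := by
  classical
  obtain ⟨s, g, lam, hg, hadj⟩ := exists_homogeneous_gens R' ℳ hfg
  obtain ⟨n, v, hCeq⟩ := hC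
  obtain ⟨F, hF1, hF2⟩ := cone_monoid lam v C hCeq
  set mon : (Fin s → ℕ) → R' := fun a => ∏ i, g i ^ a i with hmon
  set L : (Fin s → ℕ) → (Fin r → ℤ) := fun a j => ∑ i, (a i : ℤ) * lam i j with hL
  have hmonmem : ∀ a, mon a ∈ ℳ (L a) := by
    intro a
    have h := SetLike.prod_pow_mem_graded ℳ lam g a (F := Finset.univ) (fun i _ => hg i)
    have e : ∑ i, a i • lam i = L a := by
      funext j
      rw [hL]
      simp only [Finset.sum_apply, Pi.smul_apply, smul_eq_mul]
      push_cast
      rfl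
    rwa [e] at h
  have hmonadd : ∀ a b, mon (a + b) = mon a * mon b := by
    intro a b
    rw [hmon]
    simp only [Pi.add_apply, pow_add]
    rw [← Finset.prod_mul_distrib]
  have hmon0 : mon 0 = 1 := by simp [hmon]
  have hcond : ∀ a : Fin s → ℕ,
      (fun j => ((L a j : ℤ) : ℝ)) = (fun j => ∑ i, (a i : ℝ) * (lam i j : ℝ)) := by
    intro a
    funext j
    rw [hL]
    push_cast
    rfl
  -- every element of the multiplicative closure of the generators is a monomial
  have hclos : ∀ y ∈ Submonoid.closure (Set.range g), ∃ a, y = mon a := by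
    intro y hy
    induction hy using Submonoid.closure_induction with
    | mem x hx =>
      obtain ⟨i, rfl⟩ := hx
      have hps : ∏ i', g i' ^ (Pi.single i (1:ℕ)) i' = g i := by
        rw [Finset.prod_eq_single i]
        · simp
        · intro j _ hji
          rw [Pi.single_eq_of_ne hji, pow_zero]
        · intro h; exact absurd (Finset.mem_univ i) h
      exact ⟨Pi.single i 1, hps.symm⟩
    | one => exact ⟨0, hmon0.symm⟩
    | mul x y hx hy ihx ihy =>
      obtain ⟨a, rfl⟩ := ihx
      obtain ⟨b, rfl⟩ := ihy
      exact ⟨a + b, (hmonadd a b).symm⟩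
  refine ⟨F.image mon, ?_⟩
  set A₀ := Algebra.adjoin ℂ (↑(F.image mon) : Set R') with hA₀
  -- monomials with exponents in the monoid closure of F lie in A₀
  have haux : ∀ a ∈ AddSubmonoid.closure (F : Set (Fin s → ℕ)), mon a ∈ A₀ := by
    intro a ha
    induction ha using AddSubmonoid.closure_induction with
    | mem b hb =>
      apply Algebra.subset_adjoin
      rw [Finset.coe_image]
      exact Set.mem_image_of_mem mon hb
    | zero => rw [hmon0]; exact A₀.one_mem
    | add x y hx hy ihx ihy => rw [hmonadd x y]; exact A₀.mul_mem ihx ihy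
  apply le_antisymm
  · -- A₀ ≤ adjoin of the union
    apply Algebra.adjoin_le
    intro x hx
    rw [Finset.coe_image] at hx
    obtain ⟨b, hb, rfl⟩ := hx
    apply Algebra.subset_adjoin
    refine Set.mem_biUnion (show L b ∈ _ from ?_) (hmonmem b)
    show (fun j => ((L b j : ℤ) : ℝ)) ∈ C
    rw [hcond b]
    exact hF1 b hb
  · -- adjoin of the union ≤ A₀
    apply Algebra.adjoin_le
    intro x hx
    rw [Set.mem_iUnion₂] at hx
    obtain ⟨μ, hμC, hxμ⟩ := hx
    have hxspan : x ∈ Submodule.span ℂ (Submonoid.closure (Set.range g) : Set R') := by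
      have : Subalgebra.toSubmodule (Algebra.adjoin ℂ (Set.range g)) =
          Submodule.span ℂ (Submonoid.closure (Set.range g) : Set R') :=
        Algebra.adjoin_eq_span ℂ _
      rw [hadj] at this
      rw [← this]
      exact Submodule.mem_top
    have key : ∀ y ∈ Submodule.span ℂ (Submonoid.closure (Set.range g) : Set R'),
        ((DirectSum.decompose ℳ y μ : ℳ μ) : R') ∈ A₀ := by
      intro y hy
      induction hy using Submodule.span_induction with
      | mem z hz =>
        obtain ⟨a, rfl⟩ := hclos z hz
        by_cases hLa : L a = μ
        · rw [DirectSum.decompose_of_mem_same ℳ (hLa ▸ hmonmem a)]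
          apply haux
          apply hF2
          rw [← hcond a, hLa]
          exact hμC
        · rw [DirectSum.decompose_of_mem_ne ℳ (hmonmem a) hLa]
          exact A₀.zero_mem
      | zero =>
        rw [DirectSum.decompose_zero, DirectSum.zero_apply, ZeroMemClass.coe_zero]
        exact A₀.zero_mem
      | add y z hy hz ihy ihz =>
        rw [DirectSum.decompose_add, DirectSum.add_apply]
        push_cast
        exact A₀.add_mem ihy ihz
      | smul c y hy ihy =>
        rw [DirectSum.decompose_smul, DirectSum.smul_apply]
        rw [Submodule.coe_smul]
        exact A₀.smul_mem ihy c
    have := key x hxspan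
    rwa [DirectSum.decompose_of_mem_same ℳ hxμ] at this
end

section
/- Let C = ∪_{j=1}^r C_j ⊂ ℝ^r be a finite rational cone covered by finite rational subcones C_j, with C ⊆ ℝ_+^r. Then there exists N > 0 such that: if m = (m_1, …, m_r) ∈ C_j ∩ ℤ^r with Σ m_i > N, and C_j is generated over ℝ_+ by the back face of a parallelepiped in direction j (as in the main construction), then m − e_j ∈ C ∩ ℤ^r. -/
/-- In the main construction, there is a total-degree bound `N` such that for any
lattice point `m` of the cone `C_j` over the `j`-th back face with total degree
`> N`, the point `m − e_j` still lies in the cone `C` over the parallelepiped. -/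
theorem total_degree_bound (r : ℕ) (v0 : Fin r → ℝ) (b : Fin r → ℝ)
    (hv0 : ∀ i, 0 ≤ v0 i) (hb : ∀ i, 0 ≤ b i ∧ b i < 1) :
    ∃ N : ℕ, ∀ j : Fin r, ∀ m : Fin r → ℤ,
      ((fun i => (m i : ℝ)) ∈ { z : Fin r → ℝ | ∃ t : ℝ, 0 ≤ t ∧
          ∃ c : Fin r → ℝ, (∀ i, b i ≤ c i ∧ c i ≤ 1) ∧ c j = 1 ∧
            z = t • (v0 + c) }) →
      (N : ℤ) < ∑ i, m i →
      (fun i => (m i : ℝ)) - Pi.single j 1 ∈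
        { z : Fin r → ℝ | ∃ t : ℝ, 0 ≤ t ∧ ∃ c : Fin r → ℝ,
          (∀ i, b i ≤ c i ∧ c i ≤ 1) ∧ z = t • (v0 + c) } := by
  classical
  set S : ℝ := ∑ i, (v0 i + 1) with hS
  set B : ℝ := ∑ i, (1 - b i)⁻¹ with hB
  refine ⟨⌈S * B⌉₊, ?_⟩
  rintro j m ⟨t, ht, c, hc, hcj, hm⟩ hdeg
  have hbj := hb j
  have h1bj : 0 < 1 - b j := by linarith [hbj.2]
  -- S > 0
  have hSpos : 0 < S := by
    apply Finset.sum_pos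
    · intro i _; linarith [hv0 i]
    · exact ⟨j, Finset.mem_univ j⟩
  -- B ≥ (1 - b j)⁻¹
  have hBge : (1 - b j)⁻¹ ≤ B := by
    apply Finset.single_le_sum (f := fun i => (1 - b i)⁻¹) (fun i _ => ?_) (Finset.mem_univ j)
    have : 0 < 1 - b i := by linarith [(hb i).2]
    positivity
  -- sum of m in ℝ
  have hmi : ∀ i, (m i : ℝ) = t * (v0 i + c i) := by
    intro i
    have := congrFun hm i
    simpa using this
  have hsum : (∑ i, (m i : ℝ)) = t * ∑ i, (v0 i + c i) := by
    rw [Finset.mul_sum]; exact Finset.sum_congr rfl fun i _ => hmi i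
  have hsumle : (∑ i, (m i : ℝ)) ≤ t * S := by
    rw [hsum]
    apply mul_le_mul_of_nonneg_left _ ht
    apply Finset.sum_le_sum
    intro i _
    linarith [(hc i).2]
  have hcast : (⌈S * B⌉₊ : ℝ) < ∑ i, (m i : ℝ) := by
    have : ((⌈S * B⌉₊ : ℤ) : ℝ) < ((∑ i, m i : ℤ) : ℝ) := by exact_mod_cast hdeg
    simpa [Int.cast_sum] using this
  have hSB : S * B ≤ (⌈S * B⌉₊ : ℝ) := Nat.le_ceil _
  have htS : S * (1 - b j)⁻¹ < t * S := by
    have h1 : S * (1 - b j)⁻¹ ≤ S * B :=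
      mul_le_mul_of_nonneg_left hBge hSpos.le
    linarith
  have htgt : (1 - b j)⁻¹ < t := by
    nlinarith [htS, hSpos]
  have htpos : 0 < t := lt_trans (by positivity) htgt
  have hbj' : b j ≤ 1 - 1 / t := by
    have h1 : 1 / t < 1 - b j := by
      rw [div_lt_iff₀ htpos]
      nlinarith [mul_lt_mul_of_pos_left htgt h1bj, inv_mul_cancel₀ h1bj.ne']
    linarith
  refine ⟨t, ht, Function.update c j (1 - 1/t), ?_, ?_⟩
  · intro i
    by_cases hij : i = j
    · subst hij
      simp only [Function.update_self]
      constructor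
      · exact hbj'
      · have : 0 ≤ 1 / t := by positivity
        linarith
    · simp only [Function.update_of_ne hij]
      exact hc i
  · funext i
    by_cases hij : i = j
    · subst hij
      simp only [Pi.sub_apply, Pi.smul_apply, Pi.add_apply, Function.update_self,
        Pi.single_eq_same, smul_eq_mul]
      rw [hmi i, hcj]
      field_simp
      ring
    · simp only [Pi.sub_apply, Pi.smul_apply, Pi.add_apply, Function.update_of_ne hij,
        Pi.single_eq_of_ne hij, smul_eq_mul]
      rw [hmi i]
      ring
end
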